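/- Let 0 < λ < 1, let 0 = a₀ < a₁ < ... < a_{k-1} < a_k = 1, and let b₁,...,b_k ∈ ℝ. Define F : [0,1) → ℝ by F(x) = λx + b_i for x ∈ [a_{i-1}, a_i), and f(x) = F(x) mod 1. Then f has at most k periodic orbits. -/

import Mathlib

private noncomputable def nextPt (S : Finset ℝ) (u : ℝ) : ℝ :=
  if h : (S.filter (fun s => u < s)).Nonempty then (S.filter (fun s => u < s)).min' h
  else if h2 : S.Nonempty then S.min' h2 else 0

private noncomputable def gapLen (S : Finset ℝ) (u : ℝ) : ℝ :=
  nextPt S u - u + (if nextPt S u ≤ u then 1 else 0)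

private def arcMem (S : Finset ℝ) (u t : ℝ) : Prop :=
  (u < t ∧ t ≤ nextPt S u) ∨ (nextPt S u ≤ u ∧ (u < t ∨ t ≤ nextPt S u))

private lemma nextPt_mem {S : Finset ℝ} (hS : S.Nonempty) (u : ℝ) : nextPt S u ∈ S := by
  by_cases h1 : (S.filter (fun s => u < s)).Nonempty
  · unfold nextPt
    rw [dif_pos h1]
    exact Finset.mem_of_mem_filter _ ((S.filter (fun s => u < s)).min'_mem h1)
  · unfold nextPt
    rw [dif_neg h1, dif_pos hS]
    exact S.min'_mem hS

private lemma nextPt_gt {S : Finset ℝ} {u : ℝ} (h : ∃ s ∈ S, u < s) :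
    u < nextPt S u ∧ ∀ s ∈ S, u < s → nextPt S u ≤ s := by
  have hne : (S.filter (fun s => u < s)).Nonempty := by
    obtain ⟨s, hs, hus⟩ := h
    exact ⟨s, Finset.mem_filter.2 ⟨hs, hus⟩⟩
  unfold nextPt
  rw [dif_pos hne]
  constructor
  · exact (Finset.mem_filter.1 ((S.filter (fun s => u < s)).min'_mem hne)).2
  · intro s hs hus
    exact Finset.min'_le _ s (Finset.mem_filter.2 ⟨hs, hus⟩)

private lemma nextPt_min {S : Finset ℝ} {u : ℝ} (hS : S.Nonempty)
    (h : ¬ ∃ s ∈ S, u < s) : ∀ s ∈ S, nextPt S u ≤ s := by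
  have hne : ¬ (S.filter (fun s => u < s)).Nonempty := by
    rintro ⟨s, hs⟩
    exact h ⟨s, (Finset.mem_filter.1 hs).1, (Finset.mem_filter.1 hs).2⟩
  unfold nextPt
  rw [dif_neg hne, dif_pos hS]
  exact fun s hs => Finset.min'_le _ s hs

private lemma wrap_iff {S : Finset ℝ} {u : ℝ} (hS : S.Nonempty) (hu : u ∈ S) :
    nextPt S u ≤ u ↔ ¬ ∃ s ∈ S, u < s := by
  constructor
  · intro hle h
    exact absurd hle (not_le.2 (nextPt_gt h).1)
  · intro h
    exact nextPt_min hS h u hu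

private lemma arc_disjoint {S : Finset ℝ} (hS : S.Nonempty) {u u' t : ℝ}
    (hu : u ∈ S) (hu' : u' ∈ S) (h1 : arcMem S u t) (h2 : arcMem S u' t) : u = u' := by
  by_cases heq : u = u'
  · exact heq
  by_cases hw : nextPt S u ≤ u <;> by_cases hw' : nextPt S u' ≤ u'
  · -- both wrap: both are max
    have hmax : ∀ s ∈ S, s ≤ u := by
      intro s hs
      by_contra hlt
      exact ((wrap_iff hS hu).1 hw) ⟨s, hs, not_le.1 hlt⟩
    have hmax' : ∀ s ∈ S, s ≤ u' := by
      intro s hs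
      by_contra hlt
      exact ((wrap_iff hS hu').1 hw') ⟨s, hs, not_le.1 hlt⟩
    exact le_antisymm (hmax' u hu) (hmax u' hu')
  · -- u wraps, u' does not
    have hmax : ∀ s ∈ S, s ≤ u := by
      intro s hs
      by_contra hlt
      exact ((wrap_iff hS hu).1 hw) ⟨s, hs, not_le.1 hlt⟩
    rcases h2 with ⟨hu't, htn'⟩ | ⟨hc, _⟩
    · rcases h1 with ⟨hut, htn⟩ | ⟨_, hca⟩
      · exact absurd (le_trans htn hw) (not_le.2 hut)
      · rcases hca with hut | htn
        · -- u' < t, u' < u (since u' ≤ u, ≠), so nextPt u' ≤ u < t ≤ nextPt u'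
          have hu'u : u' < u := lt_of_le_of_ne (hmax u' hu') (fun h => heq h.symm)
          have := (nextPt_gt ⟨u, hu, hu'u⟩).2 u hu hu'u
          exact absurd (lt_of_le_of_lt this hut) (not_lt.2 htn')
        · -- t ≤ nextPt S u = min S ≤ u'
          have hminle : nextPt S u ≤ u' := nextPt_min hS ((wrap_iff hS hu).1 hw) u' hu'
          exact absurd (lt_of_lt_of_le hu't (le_trans htn hminle)) (lt_irrefl _)
    · exact absurd hc hw'
  · -- u' wraps, u does not (symmetric)
    have hmax' : ∀ s ∈ S, s ≤ u' := by
      intro s hs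
      by_contra hlt
      exact ((wrap_iff hS hu').1 hw') ⟨s, hs, not_le.1 hlt⟩
    rcases h1 with ⟨hut, htn⟩ | ⟨hc, _⟩
    · rcases h2 with ⟨hu't, htn'⟩ | ⟨_, hca⟩
      · exact absurd (le_trans htn' hw') (not_le.2 hu't)
      · rcases hca with hu't | htn'
        · have huu' : u < u' := lt_of_le_of_ne (hmax' u hu) heq
          have := (nextPt_gt ⟨u', hu', huu'⟩).2 u' hu' huu'
          exact absurd (lt_of_le_of_lt this hu't) (not_lt.2 htn)
        · have hminle : nextPt S u' ≤ u := nextPt_min hS ((wrap_iff hS hu').1 hw') u hu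
          exact absurd (lt_of_lt_of_le hut (le_trans htn' hminle)) (lt_irrefl _)
    · exact absurd hc hw
  · -- neither wraps
    rcases h1 with ⟨hut, htn⟩ | ⟨hc, _⟩
    · rcases h2 with ⟨hu't, htn'⟩ | ⟨hc', _⟩
      · rcases lt_trichotomy u u' with hlt | he | hgt
        · -- u < u' < t ≤ nextPt S u ≤ u'
          have := (nextPt_gt ⟨u', hu', hlt⟩).2 u' hu' hlt
          exact absurd (lt_of_le_of_lt this hu't) (not_lt.2 htn)
        · exact he
        · have := (nextPt_gt ⟨u, hu, hgt⟩).2 u hu hgt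
          exact absurd (lt_of_le_of_lt this hut) (not_lt.2 htn')
      · exact absurd hc' hw'
    · exact absurd hc hw

private lemma gapLen_pos {S : Finset ℝ} (u : ℝ) (hS : S.Nonempty)
    (hsub : ∀ s ∈ S, s ∈ Set.Ico (0:ℝ) 1) (hu : u ∈ S) : 0 < gapLen S u := by
  unfold gapLen
  split_ifs with h
  · have h0 : (0:ℝ) ≤ nextPt S u := (hsub _ (nextPt_mem hS u)).1
    have h1 : u < 1 := (hsub u hu).2
    linarith
  · linarith [not_le.1 h]

private lemma exists_interval (k : ℕ) (a : Fin (k+1) → ℝ) (ha : StrictMono a)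
    (ha0 : a 0 = 0) (hak : a (Fin.last k) = 1) {t : ℝ} (ht : t ∈ Set.Ico (0:ℝ) 1) :
    ∃ i : Fin k, t ∈ Set.Ico (a i.castSucc) (a i.succ) := by
  classical
  set F : Finset (Fin (k+1)) := Finset.univ.filter (fun i => a i ≤ t) with hF
  have hne : F.Nonempty := ⟨0, by simp [hF, ha0, ht.1]⟩
  set i₀ := F.max' hne with hi₀
  have hi₀mem : i₀ ∈ F := F.max'_mem hne
  have hi₀le : a i₀ ≤ t := by
    have := Finset.mem_filter.1 hi₀mem
    exact this.2
  have hlast : i₀ ≠ Fin.last k := by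
    intro h
    rw [h, hak] at hi₀le
    linarith [ht.2]
  obtain ⟨j, hj⟩ := Fin.exists_castSucc_eq.2 hlast
  refine ⟨j, by rw [hj]; exact hi₀le, ?_⟩
  by_contra hge
  push_neg at hge
  have hmem : j.succ ∈ F := by simp [hF, hge]
  have hle := F.le_max' _ hmem
  rw [← hi₀, ← hj] at hle
  exact absurd (lt_of_le_of_lt hle (Fin.castSucc_lt_succ : j.castSucc < j.succ)) (lt_irrefl _)

private lemma iterate_mod {α : Type*} (f : α → α) (x : α) (p : ℕ) (hp : f^[p] x = x) (n : ℕ) :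
    f^[n] x = f^[n % p] x := by
  conv_lhs => rw [← Nat.mod_add_div n p]
  rw [Function.iterate_add_apply]
  congr 1
  rw [Function.iterate_mul]
  exact Function.IsFixedPt.iterate hp (n / p)

private lemma orbit_shift {α : Type*} (f : α → α) (x : α) (p m : ℕ) (hp : f^[p] x = x)
    (hp1 : 1 ≤ p) :
    (Set.range fun n => f^[n] (f^[m] x)) = Set.range fun n => f^[n] x := by
  have hback : f^[m * (p-1)] (f^[m] x) = x := by
    rw [← Function.iterate_add_apply]
    obtain ⟨q, rfl⟩ : ∃ q, p = q + 1 := ⟨p - 1, by omega⟩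
    have h : m * (q + 1 - 1) + m = (q + 1) * m := by
      simp only [Nat.add_sub_cancel]
      ring
    rw [h, Function.iterate_mul]
    exact Function.IsFixedPt.iterate hp m
  ext y
  constructor
  · rintro ⟨n, rfl⟩
    exact ⟨n + m, Function.iterate_add_apply f n m x⟩
  · rintro ⟨n, rfl⟩
    refine ⟨n + m * (p-1), ?_⟩
    simp only
    rw [Function.iterate_add_apply, hback]

private lemma good_step (k : ℕ) (hk : 1 ≤ k) (lam : ℝ) (hlam0 : 0 < lam) (hlam1 : lam < 1)
    (a : Fin (k+1) → ℝ) (ha : StrictMono a) (ha0 : a 0 = 0) (hak : a (Fin.last k) = 1)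
    (b : Fin k → ℝ) (f : ℝ → ℝ)
    (hf : ∀ i : Fin k, ∀ x ∈ Set.Ico (a i.castSucc) (a i.succ),
      f x = Int.fract (lam * x + b i))
    (S : Finset ℝ) (hS : S.Nonempty) (hsub : ∀ s ∈ S, s ∈ Set.Ico (0:ℝ) 1)
    (hfS : ∀ s ∈ S, f s ∈ S) (u : ℝ) (hu : u ∈ S)
    (hgood : ∀ i : Fin k, ¬ arcMem S u (a i.castSucc)) :
    gapLen S (f u) ≤ lam * gapLen S u := by
  have huI := hsub u hu
  have hvS : nextPt S u ∈ S := nextPt_mem hS u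
  have hvI := hsub _ hvS
  have hnw : ¬ nextPt S u ≤ u := by
    intro hwle
    apply hgood ⟨0, hk⟩
    right
    refine ⟨hwle, Or.inr ?_⟩
    have h0 : a (Fin.castSucc ⟨0, hk⟩) = 0 := by
      rw [show Fin.castSucc (⟨0, hk⟩ : Fin k) = (0 : Fin (k+1)) by ext; simp]
      exact ha0
    rw [h0]
    exact hvI.1
  have huv : u < nextPt S u := not_le.1 hnw
  obtain ⟨i, hiu⟩ := exists_interval k a ha ha0 hak huI
  have hvlt : nextPt S u < a i.succ := by
    by_contra hge
    push_neg at hge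
    have hlast : i.succ ≠ Fin.last k := by
      intro h
      rw [h, hak] at hge
      linarith [hvI.2]
    obtain ⟨j, hj⟩ := Fin.exists_castSucc_eq.2 hlast
    apply hgood j
    left
    rw [hj]
    exact ⟨hiu.2, hge⟩
  have hvmem : nextPt S u ∈ Set.Ico (a i.castSucc) (a i.succ) :=
    ⟨le_trans hiu.1 (le_of_lt huv), hvlt⟩
  have hfu : f u = Int.fract (lam * u + b i) := hf i u hiu
  have hfv : f (nextPt S u) = Int.fract (lam * (nextPt S u) + b i) := hf i _ hvmem
  have hd0 : 0 < nextPt S u - u := by linarith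
  have hd1 : nextPt S u - u < 1 := by linarith [huI.1, hvI.2]
  have hfuI : f u ∈ Set.Ico (0:ℝ) 1 := by
    rw [hfu]; exact ⟨Int.fract_nonneg _, Int.fract_lt_one _⟩
  have hfvI : f (nextPt S u) ∈ Set.Ico (0:ℝ) 1 := by
    rw [hfv]; exact ⟨Int.fract_nonneg _, Int.fract_lt_one _⟩
  have hdiff : f (nextPt S u) - f u
      = lam * (nextPt S u - u)
        - ((⌊lam * (nextPt S u) + b i⌋ - ⌊lam * u + b i⌋ : ℤ) : ℝ) := by
    rw [hfu, hfv, Int.fract, Int.fract]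
    push_cast
    ring
  have hld0 : 0 < lam * (nextPt S u - u) := mul_pos hlam0 hd0
  have hld1 : lam * (nextPt S u - u) < 1 := by nlinarith
  have hm : (⌊lam * (nextPt S u) + b i⌋ - ⌊lam * u + b i⌋ : ℤ) = 0
      ∨ (⌊lam * (nextPt S u) + b i⌋ - ⌊lam * u + b i⌋ : ℤ) = 1 := by
    have hb1 : ((⌊lam * (nextPt S u) + b i⌋ - ⌊lam * u + b i⌋ : ℤ) : ℝ) < 2 := by
      have := hfvI.1; have := hfuI.2; linarith
    have hb2 : (-1 : ℝ) < ((⌊lam * (nextPt S u) + b i⌋ - ⌊lam * u + b i⌋ : ℤ) : ℝ) := by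
      have := hfvI.2; have := hfuI.1; linarith
    have hb1' : (⌊lam * (nextPt S u) + b i⌋ - ⌊lam * u + b i⌋ : ℤ) < 2 := by exact_mod_cast hb1
    have hb2' : (-1 : ℤ) < (⌊lam * (nextPt S u) + b i⌋ - ⌊lam * u + b i⌋ : ℤ) := by
      exact_mod_cast hb2
    omega
  have hgapu : gapLen S u = nextPt S u - u := by
    unfold gapLen
    rw [if_neg hnw]
    ring
  have hfuS : f u ∈ S := hfS u hu
  have hfvS : f (nextPt S u) ∈ S := hfS _ hvS
  rw [hgapu]
  rcases hm with hm0 | hm1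
  · have hfv' : f (nextPt S u) - f u = lam * (nextPt S u - u) := by
      rw [hdiff, hm0]
      push_cast
      ring
    have hlt : f u < f (nextPt S u) := by linarith
    have hnext := nextPt_gt ⟨f (nextPt S u), hfvS, hlt⟩
    have hle : nextPt S (f u) ≤ f (nextPt S u) := hnext.2 _ hfvS hlt
    unfold gapLen
    rw [if_neg (not_le.2 hnext.1)]
    linarith
  · have hfv' : f (nextPt S u) - f u = lam * (nextPt S u - u) - 1 := by
      rw [hdiff, hm1]
      push_cast
      ring
    by_cases hex : ∃ s ∈ S, f u < s
    · have hnext := nextPt_gt hex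
      have hlt1 : nextPt S (f u) < 1 := (hsub _ (nextPt_mem hS (f u))).2
      unfold gapLen
      rw [if_neg (not_le.2 hnext.1)]
      have h0fv : 0 ≤ f (nextPt S u) := hfvI.1
      linarith
    · have hmin := nextPt_min hS hex
      have hle : nextPt S (f u) ≤ f u := hmin _ hfuS
      have hlefv : nextPt S (f u) ≤ f (nextPt S u) := hmin _ hfvS
      unfold gapLen
      rw [if_pos hle]
      linarith

private lemma key (k : ℕ) (hk : 1 ≤ k) (lam : ℝ) (hlam0 : 0 < lam) (hlam1 : lam < 1)
    (a : Fin (k+1) → ℝ) (ha : StrictMono a) (ha0 : a 0 = 0) (hak : a (Fin.last k) = 1)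
    (b : Fin k → ℝ) (f : ℝ → ℝ)
    (hf : ∀ i : Fin k, ∀ x ∈ Set.Ico (a i.castSucc) (a i.succ),
      f x = Int.fract (lam * x + b i))
    (x : Fin (k+1) → ℝ) (hx : ∀ j, x j ∈ Set.Ico (0:ℝ) 1)
    (p : Fin (k+1) → ℕ) (hp1 : ∀ j, 1 ≤ p j) (hp : ∀ j, f^[p j] (x j) = x j)
    (hor : Function.Injective fun j => Set.range fun n => f^[n] (x j)) : False := by
  classical
  -- f preserves [0,1)
  have hfI : ∀ y ∈ Set.Ico (0:ℝ) 1, f y ∈ Set.Ico (0:ℝ) 1 := by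
    intro y hy
    obtain ⟨i, hi⟩ := exists_interval k a ha ha0 hak hy
    rw [hf i y hi]
    exact ⟨Int.fract_nonneg _, Int.fract_lt_one _⟩
  have hiterI : ∀ (j : Fin (k+1)) (n : ℕ), f^[n] (x j) ∈ Set.Ico (0:ℝ) 1 := by
    intro j n
    induction n with
    | zero => simpa using hx j
    | succ n ih =>
      rw [Function.iterate_succ_apply']
      exact hfI _ ih
  set S : Finset ℝ :=
    Finset.univ.biUnion (fun j : Fin (k+1) =>
      (Finset.range (p j)).image (fun n => f^[n] (x j))) with hSdef
  have hmemS : ∀ (j : Fin (k+1)) (n : ℕ), f^[n] (x j) ∈ S := by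
    intro j n
    rw [iterate_mod f (x j) (p j) (hp j) n]
    apply Finset.mem_biUnion.2
    exact ⟨j, Finset.mem_univ j,
      Finset.mem_image.2 ⟨n % p j, Finset.mem_range.2 (Nat.mod_lt _ (hp1 j)), rfl⟩⟩
  have hS : S.Nonempty := ⟨x 0, by simpa using hmemS 0 0⟩
  have hsub : ∀ s ∈ S, s ∈ Set.Ico (0:ℝ) 1 := by
    intro s hs
    obtain ⟨j, _, hs2⟩ := Finset.mem_biUnion.1 hs
    obtain ⟨n, _, rfl⟩ := Finset.mem_image.1 hs2
    exact hiterI j n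
  have hfS : ∀ s ∈ S, f s ∈ S := by
    intro s hs
    obtain ⟨j, _, hs2⟩ := Finset.mem_biUnion.1 hs
    obtain ⟨n, _, rfl⟩ := Finset.mem_image.1 hs2
    rw [← Function.iterate_succ_apply' f n (x j)]
    exact hmemS j (n+1)
  -- every orbit contains a bad point
  have hbad : ∀ j : Fin (k+1), ∃ nn : ℕ, ∃ i : Fin k,
      arcMem S (f^[nn] (x j)) (a i.castSucc) := by
    intro j
    by_contra hcon
    push_neg at hcon
    have hiter : ∀ n : ℕ, gapLen S (f^[n] (x j)) ≤ lam ^ n * gapLen S (x j) := by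
      intro n
      induction n with
      | zero => simp
      | succ n ih =>
        rw [Function.iterate_succ_apply']
        have hstep := good_step k hk lam hlam0 hlam1 a ha ha0 hak b f hf S hS hsub hfS
          (f^[n] (x j)) (hmemS j n) (fun i hmem => hcon n i hmem)
        calc gapLen S (f (f^[n] (x j))) ≤ lam * gapLen S (f^[n] (x j)) := hstep
          _ ≤ lam * (lam ^ n * gapLen S (x j)) :=
              mul_le_mul_of_nonneg_left ih hlam0.le
          _ = lam ^ (n+1) * gapLen S (x j) := by ring
    have hfin := hiter (p j)
    rw [hp j] at hfin
    have hgp : 0 < gapLen S (x j) := by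
      have := gapLen_pos (x j) hS hsub (by simpa using hmemS j 0)
      exact this
    have hpow : lam ^ (p j) < 1 := pow_lt_one₀ hlam0.le hlam1 (by have := hp1 j; omega)
    nlinarith
  choose nn ii hb using hbad
  have hinj : Function.Injective ii := by
    intro j j' he
    have heq : f^[nn j] (x j) = f^[nn j'] (x j') := by
      refine arc_disjoint hS (hmemS j (nn j)) (hmemS j' (nn j')) (hb j) ?_
      rw [he]
      exact hb j'
    apply hor
    have h1 := orbit_shift f (x j) (p j) (nn j) (hp j) (hp1 j)
    have h2 := orbit_shift f (x j') (p j') (nn j') (hp j') (hp1 j')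
    simp only
    rw [← h1, ← h2, heq]
  have hcard := Fintype.card_le_of_injective ii hinj
  simp only [Fintype.card_fin] at hcard
  omega

/-- A piecewise λ-affine map `f(x) = λx + bᵢ (mod 1)` on `[a_{i-1}, a_i)`,
with breakpoints `0 = a₀ < a₁ < ... < a_k = 1` and `0 < λ < 1`, has at most `k`
periodic orbits. -/
theorem stmt_6 (k : ℕ) (hk : 1 ≤ k) (lam : ℝ) (hlam0 : 0 < lam) (hlam1 : lam < 1)
    (a : Fin (k+1) → ℝ) (ha : StrictMono a) (ha0 : a 0 = 0) (hak : a (Fin.last k) = 1)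
    (b : Fin k → ℝ) (f : ℝ → ℝ)
    (hf : ∀ i : Fin k, ∀ x ∈ Set.Ico (a i.castSucc) (a i.succ),
      f x = Int.fract (lam * x + b i)) :
    {O : Set ℝ | ∃ x, x ∈ Set.Ico (0:ℝ) 1 ∧ (∃ p, 1 ≤ p ∧ f^[p] x = x) ∧
        O = Set.range fun n => f^[n] x}.Finite ∧
    {O : Set ℝ | ∃ x, x ∈ Set.Ico (0:ℝ) 1 ∧ (∃ p, 1 ≤ p ∧ f^[p] x = x) ∧
        O = Set.range fun n => f^[n] x}.ncard ≤ k := by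
  classical
  set P : Set (Set ℝ) := {O : Set ℝ | ∃ x, x ∈ Set.Ico (0:ℝ) 1 ∧
    (∃ p, 1 ≤ p ∧ f^[p] x = x) ∧ O = Set.range fun n => f^[n] x} with hP
  have main : ∀ s : Finset (Set ℝ), ↑s ⊆ P → s.card ≤ k := by
    intro s hsP
    by_contra hlt
    push_neg at hlt
    have hle : k + 1 ≤ s.card := hlt
    let e := s.equivFin
    let σ : Fin (k+1) → Set ℝ := fun j => (e.symm (Fin.castLE hle j) : Set ℝ)
    have hσinj : Function.Injective σ := by
      intro j j' h
      exact Fin.castLE_injective hle (e.symm.injective (Subtype.coe_injective h))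
    have hσP : ∀ j, σ j ∈ P := fun j => hsP (e.symm (Fin.castLE hle j)).2
    have hex : ∀ j, ∃ x, x ∈ Set.Ico (0:ℝ) 1 ∧ (∃ p, 1 ≤ p ∧ f^[p] x = x) ∧
        σ j = Set.range fun n => f^[n] x := fun j => hσP j
    choose x hx hrest using hex
    have hper : ∀ j, ∃ p, 1 ≤ p ∧ f^[p] (x j) = x j := fun j => (hrest j).1
    have horb : ∀ j, σ j = Set.range fun n => f^[n] (x j) := fun j => (hrest j).2
    choose p hp1 hp using hper
    apply key k hk lam hlam0 hlam1 a ha ha0 hak b f hf x hx p hp1 hp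
    intro j j' h
    apply hσinj
    rw [horb j, horb j']
    exact h
  have hfin : P.Finite := by
    by_contra hinf
    have hinf' : P.Infinite := hinf
    obtain ⟨t, hts, htcard⟩ := hinf'.exists_subset_card_eq (k+1)
    have := main t hts
    omega
  refine ⟨hfin, ?_⟩
  rw [Set.ncard_eq_toFinset_card P hfin]
  exact main hfin.toFinset (by simp [Set.Finite.coe_toFinset])
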